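/- arXiv:1811.07049 — 2 statements merged into one kernel-verified Lean document; each statement's English description precedes it below -/
import Mathlib

section
/- Let V(q, q̇) = (1/2) q̇ᵀ G(q, q̇) q̇ + Φ(q) where G is differentiable with symmetric values and Φ differentiable. Suppose (q(t), q̇(t)) satisfies (G(q,q̇) + Ξ_G(q,q̇)) q̈ + ξ_G(q,q̇) = −∇Φ(q) − B(q,q̇) q̇, where Ξ_G(q,q̇) = (1/2)Σ_i q̇_i ∂_{q̇} g_i(q,q̇) and ξ_G(q,q̇) = Ġ_q(q,q̇)q̇ − (1/2)∇_q(q̇ᵀ G q̇). Then along any solution, dV/dt = −q̇ᵀ B(q,q̇) q̇. -/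
open Matrix

/-- Partial derivative of a scalar function on `ℝ^d` in the `k`-th coordinate direction. -/
noncomputable def pd {d : ℕ} (k : Fin d) (f : (Fin d → ℝ) → ℝ) (x : Fin d → ℝ) : ℝ :=
  fderiv ℝ f x (Pi.single k 1)

/-- `Ξ_G(q,q̇) = (1/2) Σ_i q̇_i ∂_{q̇} g_i(q,q̇)`. -/
noncomputable def XiMat {d : ℕ} (G : (Fin d → ℝ) → (Fin d → ℝ) → Matrix (Fin d) (Fin d) ℝ)
    (q v : Fin d → ℝ) : Matrix (Fin d) (Fin d) ℝ :=
  fun j k => (1 / 2) * ∑ i, v i * pd k (fun v' => G q v' j i) v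

/-- `ξ_G(q,q̇) = Ġ_q(q,q̇)q̇ − (1/2)∇_q(q̇ᵀ G q̇)`. -/
noncomputable def xiVec {d : ℕ} (G : (Fin d → ℝ) → (Fin d → ℝ) → Matrix (Fin d) (Fin d) ℝ)
    (q v : Fin d → ℝ) : Fin d → ℝ :=
  fun i => (∑ j, (∑ k, v k * pd k (fun q' => G q' v i j) q) * v j)
    - (1 / 2) * pd i (fun q' => v ⬝ᵥ (G q' v).mulVec v) q

section helpers

variable {d : ℕ}

lemma clm_single (L : (Fin d → ℝ) →L[ℝ] ℝ) (w : Fin d → ℝ) :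
    L w = ∑ k, w k * L (Pi.single k 1) := by
  have hw : w = ∑ k, w k • (Pi.single k 1 : Fin d → ℝ) := by
    ext i; simp [Pi.single_apply, Finset.sum_ite_eq']
  conv_lhs => rw [hw]
  simp [map_sum, _root_.map_smul, smul_eq_mul]

lemma clm_decomp (L : ((Fin d → ℝ) × (Fin d → ℝ)) →L[ℝ] ℝ) (w u : Fin d → ℝ) :
    L (w, u) = (∑ k, w k * L (Pi.single k 1, 0)) + ∑ k, u k * L (0, Pi.single k 1) := by
  have h : (w, u) = (∑ k, w k • ((Pi.single k 1 : Fin d → ℝ), (0 : Fin d → ℝ)))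
      + ∑ k, u k • ((0 : Fin d → ℝ), (Pi.single k 1 : Fin d → ℝ)) := by
    ext i <;>
      simp [Prod.fst_sum, Prod.snd_sum, Pi.single_apply, Finset.sum_ite_eq']
  rw [h, map_add, map_sum, map_sum]
  congr 1 <;> refine Finset.sum_congr rfl fun k _ => ?_ <;>
    rw [ContinuousLinearMap.map_smul, smul_eq_mul]

lemma pd_slice_left (f : (Fin d → ℝ) × (Fin d → ℝ) → ℝ) (hf : Differentiable ℝ f)
    (x v : Fin d → ℝ) (k : Fin d) :
    pd k (fun x' => f (x', v)) x = fderiv ℝ f (x, v) (Pi.single k 1, 0) := by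
  have h : HasFDerivAt (fun x' => f (x', v))
      ((fderiv ℝ f (x, v)).comp (ContinuousLinearMap.inl ℝ _ _)) x :=
    (hf (x, v)).hasFDerivAt.comp x (hasFDerivAt_prodMk_left x v)
  rw [pd, h.fderiv]; rfl

lemma pd_slice_right (f : (Fin d → ℝ) × (Fin d → ℝ) → ℝ) (hf : Differentiable ℝ f)
    (x v : Fin d → ℝ) (k : Fin d) :
    pd k (fun v' => f (x, v')) v = fderiv ℝ f (x, v) (0, Pi.single k 1) := by
  have h : HasFDerivAt (fun v' => f (x, v'))
      ((fderiv ℝ f (x, v)).comp (ContinuousLinearMap.inr ℝ _ _)) v :=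
    (hf (x, v)).hasFDerivAt.comp v (hasFDerivAt_prodMk_right x v)
  rw [pd, h.fderiv]; rfl

lemma sum_rot (f : Fin d → Fin d → Fin d → ℝ) :
    ∑ i, ∑ j, ∑ k, f i j k = ∑ i, ∑ j, ∑ k, f j k i := by
  have h1 : ∀ g : Fin d → Fin d → ℝ, ∑ i, ∑ j, g i j = ∑ j, ∑ i, g i j :=
    fun g => Finset.sum_comm
  calc ∑ i, ∑ j, ∑ k, f i j k
      = ∑ i, ∑ k, ∑ j, f i j k := Finset.sum_congr rfl fun i _ => h1 _
    _ = ∑ k, ∑ i, ∑ j, f i j k := h1 _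

end helpers

/-- Energy-dissipation identity for GDSs: along any solution of
`(G + Ξ_G) q̈ + ξ_G = −∇Φ − B q̇`, the total energy `V = (1/2)q̇ᵀGq̇ + Φ` satisfies
`dV/dt = −q̇ᵀ B q̇`. -/
theorem gds_energy_dissipation {d : ℕ}
    (G : (Fin d → ℝ) → (Fin d → ℝ) → Matrix (Fin d) (Fin d) ℝ)
    (B : (Fin d → ℝ) → (Fin d → ℝ) → Matrix (Fin d) (Fin d) ℝ)
    (Φ : (Fin d → ℝ) → ℝ)
    (q : ℝ → (Fin d → ℝ))
    (hG : ∀ i j, Differentiable ℝ fun p : (Fin d → ℝ) × (Fin d → ℝ) => G p.1 p.2 i j)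
    (hsym : ∀ x v i j, G x v i j = G x v j i)
    (hΦ : Differentiable ℝ Φ)
    (hq : ContDiff ℝ 2 q)
    (hode : ∀ t : ℝ,
      (G (q t) (deriv q t) + XiMat G (q t) (deriv q t)).mulVec (deriv (deriv q) t)
          + xiVec G (q t) (deriv q t)
        = (fun i => - pd i Φ (q t)) - (B (q t) (deriv q t)).mulVec (deriv q t)) :
    ∀ t : ℝ,
      deriv (fun t' =>
          (1 / 2) * (deriv q t' ⬝ᵥ (G (q t') (deriv q t')).mulVec (deriv q t')) + Φ (q t')) t
        = -(deriv q t ⬝ᵥ (B (q t) (deriv q t)).mulVec (deriv q t)) := by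
  intro t
  have hq1 : Differentiable ℝ q := hq.differentiable two_ne_zero
  have h2 : ContDiff ℝ (1 + 1) q := by
    rw [show ((1 : WithTop ℕ∞) + 1) = 2 from rfl]; exact hq
  have hv : Differentiable ℝ (deriv q) :=
    (contDiff_succ_iff_deriv.mp h2).2.2.differentiable one_ne_zero
  -- notation
  set x : Fin d → ℝ := q t with hx
  set v : Fin d → ℝ := deriv q t with hvt
  set a : Fin d → ℝ := deriv (deriv q) t with hat
  have hqd : HasDerivAt q v t := hq1.differentiableAt.hasDerivAt
  have hvd : HasDerivAt (deriv q) a t := hv.differentiableAt.hasDerivAt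
  have hP : HasDerivAt (fun t' => (q t', deriv q t')) (v, a) t := hqd.prodMk hvd
  have hvi : ∀ i, HasDerivAt (fun t' => deriv q t' i) (a i) t := fun i =>
    hasDerivAt_pi.mp hvd i
  set D : Fin d → Fin d → ℝ := fun i j =>
    fderiv ℝ (fun p : (Fin d → ℝ) × (Fin d → ℝ) => G p.1 p.2 i j) (x, v) (v, a) with hD
  have hGd : ∀ i j, HasDerivAt (fun t' => G (q t') (deriv q t') i j) (D i j) t := fun i j =>
    by have := ((hG i j) (x, v)).hasFDerivAt.comp_hasDerivAt t hP; exact this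
  -- derivative of the kinetic double sum
  set S : ℝ := ∑ i, ∑ j,
      (a i * (G x v i j * v j) + v i * (D i j * v j + G x v i j * a j)) with hSdef
  have hK : HasDerivAt (fun t' =>
      ∑ i, ∑ j, deriv q t' i * (G (q t') (deriv q t') i j * deriv q t' j)) S t := by
    rw [hSdef]
    exact HasDerivAt.fun_sum fun i _ => HasDerivAt.fun_sum fun j _ =>
      (hvi i).mul ((hGd i j).mul (hvi j))
  have hΦd : HasDerivAt (fun t' => Φ (q t')) (fderiv ℝ Φ x v) t :=
    (hΦ x).hasFDerivAt.comp_hasDerivAt t hqd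
  have hV : HasDerivAt (fun t' =>
      (1 / 2) * (deriv q t' ⬝ᵥ (G (q t') (deriv q t')).mulVec (deriv q t')) + Φ (q t'))
      ((1 / 2) * S + fderiv ℝ Φ x v) t := by
    have h := (hK.const_mul (1 / 2 : ℝ)).add hΦd
    refine h.congr_of_eventuallyEq (Filter.Eventually.of_forall fun t' => ?_)
    simp [dotProduct, mulVec, Finset.mul_sum]
  rw [hV.deriv]
  -- abbreviations for partial derivatives
  set P : Fin d → Fin d → Fin d → ℝ :=
    fun k i j => pd k (fun q' => G q' v i j) x with hPdef
  set Q : Fin d → Fin d → Fin d → ℝ :=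
    fun k i j => pd k (fun v' => G x v' i j) v with hQdef
  -- decomposition of D
  have hDa : ∀ i j, D i j = (∑ k, v k * P k i j) + (∑ k, a k * Q k i j) := by
    intro i j
    have hd : D i j
        = (fderiv ℝ (fun p : (Fin d → ℝ) × (Fin d → ℝ) => G p.1 p.2 i j) (x, v)) (v, a) := rfl
    have hp : ∀ k, P k i j = pd k (fun q' => G q' v i j) x := fun k => rfl
    have hq' : ∀ k, Q k i j = pd k (fun v' => G x v' i j) v := fun k => rfl
    rw [hd, clm_decomp]
    congr 1 <;> refine Finset.sum_congr rfl fun k _ => ?_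
    · rw [hp k, pd_slice_left _ (hG i j)]
    · rw [hq' k, pd_slice_right _ (hG i j)]
  -- gradient of Φ
  have hΦv : fderiv ℝ Φ x v = ∑ i, v i * pd i Φ x := clm_single (fderiv ℝ Φ x) v
  -- gradient of the quadratic form (Fact C)
  have hC : ∀ i, pd i (fun q' => v ⬝ᵥ (G q' v).mulVec v) x
      = ∑ j, ∑ k, v j * v k * P i j k := by
    intro i
    have hslice : ∀ j k, HasFDerivAt (fun q' => G q' v j k)
        (fderiv ℝ (fun q' => G q' v j k) x) x := fun j k =>
      (((hG j k).comp ((differentiable_id).prodMk (differentiable_const v))) x).hasFDerivAt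
    have hsum : HasFDerivAt (fun q' => ∑ j, ∑ k, v j * (G q' v j k * v k))
        (∑ j, ∑ k, (v j * v k) • fderiv ℝ (fun q' => G q' v j k) x) x := by
      refine HasFDerivAt.fun_sum fun j _ => HasFDerivAt.fun_sum fun k _ => ?_
      have h1 := ((hslice j k).mul_const (v k)).const_mul (v j)
      rw [← smul_smul]; exact h1
    have hfun : (fun q' => v ⬝ᵥ (G q' v).mulVec v)
        = fun q' => ∑ j, ∑ k, v j * (G q' v j k * v k) := by
      funext q'; simp [dotProduct, mulVec, Finset.mul_sum]
    rw [pd, hfun, hsum.fderiv]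
    simp only [ContinuousLinearMap.coe_sum', Finset.sum_apply, ContinuousLinearMap.coe_smul',
      Pi.smul_apply, smul_eq_mul]
    rfl
  -- ODE dotted with v, componentwise
  have hsub : ∀ i, ((G x v + XiMat G x v).mulVec a) i + xiVec G x v i
      = -pd i Φ x - ((B x v).mulVec v) i := by
    intro i
    have h := hode t
    rw [← hat, ← hvt, ← hx] at h
    simpa using congrFun h i
  -- split S into three double sums
  have hS3 : S = (∑ i, ∑ j, (a i * (G x v i j * v j) + v i * (G x v i j * a j)))
      + (∑ i, ∑ j, v i * (∑ k, a k * Q k i j) * v j)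
      + (∑ i, ∑ j, v i * (∑ k, v k * P k i j) * v j) := by
    rw [hSdef]
    rw [← Finset.sum_add_distrib, ← Finset.sum_add_distrib]
    refine Finset.sum_congr rfl fun i _ => ?_
    rw [← Finset.sum_add_distrib, ← Finset.sum_add_distrib]
    refine Finset.sum_congr rfl fun j _ => ?_
    rw [hDa i j]; ring
  -- part A
  have subA : (1/2) * (∑ i, ∑ j, (a i * (G x v i j * v j) + v i * (G x v i j * a j)))
      = ∑ i, v i * ((G x v).mulVec a) i := by
    have e : ∑ i, ∑ j, a i * (G x v i j * v j) = ∑ i, ∑ j, v i * (G x v i j * a j) := by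
      rw [Finset.sum_comm]
      refine Finset.sum_congr rfl fun i _ => Finset.sum_congr rfl fun j _ => ?_
      rw [hsym x v j i]; ring
    have split : ∑ i, ∑ j, (a i * (G x v i j * v j) + v i * (G x v i j * a j))
        = (∑ i, ∑ j, a i * (G x v i j * v j)) + ∑ i, ∑ j, v i * (G x v i j * a j) := by
      rw [← Finset.sum_add_distrib]
      exact Finset.sum_congr rfl fun i _ => Finset.sum_add_distrib
    rw [split, e]
    simp only [mulVec, dotProduct, Finset.mul_sum]
    ring
  -- part B
  have subB : (1/2) * (∑ i, ∑ j, v i * (∑ k, a k * Q k i j) * v j)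
      = ∑ i, v i * ((XiMat G x v).mulVec a) i := by
    have hQ' : ∀ k i j, pd k (fun v' => G x v' i j) v = Q k i j := fun _ _ _ => rfl
    simp only [XiMat, mulVec, dotProduct, hQ']
    simp only [Finset.mul_sum, Finset.sum_mul]
    refine Finset.sum_congr rfl fun i _ => ?_
    rw [Finset.sum_comm]
    refine Finset.sum_congr rfl fun k _ => Finset.sum_congr rfl fun j _ => ?_
    ring
  -- part C
  have subC : (1/2) * (∑ i, ∑ j, v i * (∑ k, v k * P k i j) * v j)
      = ∑ i, v i * xiVec G x v i := by
    have hP' : ∀ k i j, pd k (fun q' => G q' v i j) x = P k i j := fun _ _ _ => rfl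
    have hxi : ∀ i, xiVec G x v i = (∑ j, (∑ k, v k * P k i j) * v j)
        - (1/2) * (∑ j, ∑ k, v j * v k * P i j k) := by
      intro i
      simp only [xiVec, hP', hC i]
    have hAB : ∑ i, ∑ j, v i * (∑ k, v k * P k i j) * v j
        = ∑ i, v i * (∑ j, ∑ k, v j * v k * P i j k) := by
      simp only [Finset.mul_sum, Finset.sum_mul]
      rw [sum_rot]
      refine Finset.sum_congr rfl fun i _ => Finset.sum_congr rfl fun j _ =>
        Finset.sum_congr rfl fun k _ => ?_
      ring
    have hA12 : ∑ i, v i * (∑ j, (∑ k, v k * P k i j) * v j)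
        = ∑ i, ∑ j, v i * (∑ k, v k * P k i j) * v j := by
      refine Finset.sum_congr rfl fun i _ => ?_
      rw [Finset.mul_sum]
      exact Finset.sum_congr rfl fun j _ => by ring
    have hfin : ∑ i, v i * xiVec G x v i
        = (∑ i, v i * (∑ j, (∑ k, v k * P k i j) * v j))
          - (1/2) * ∑ i, v i * (∑ j, ∑ k, v j * v k * P i j k) := by
      rw [Finset.mul_sum, ← Finset.sum_sub_distrib]
      refine Finset.sum_congr rfl fun i _ => ?_
      rw [hxi i]; ring
    rw [hfin, hA12, hAB]
    ring
  -- assemble the key identity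
  have hR : ∑ i, v i * (((G x v + XiMat G x v).mulVec a) i + xiVec G x v i)
      = (1/2) * S := by
    calc ∑ i, v i * (((G x v + XiMat G x v).mulVec a) i + xiVec G x v i)
        = (∑ i, v i * ((G x v).mulVec a) i) + (∑ i, v i * ((XiMat G x v).mulVec a) i)
          + ∑ i, v i * xiVec G x v i := by
          rw [← Finset.sum_add_distrib, ← Finset.sum_add_distrib]
          refine Finset.sum_congr rfl fun i _ => ?_
          rw [Matrix.add_mulVec]
          simp only [Pi.add_apply]
          ring
      _ = (1/2) * S := by rw [← subA, ← subB, ← subC, hS3]; ring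
  -- finish
  calc (1/2 : ℝ) * S + fderiv ℝ Φ x v
      = ∑ i, v i * (((G x v + XiMat G x v).mulVec a) i + xiVec G x v i)
        + ∑ i, v i * pd i Φ x := by rw [hR, hΦv]
    _ = ∑ i, (v i * (-pd i Φ x - ((B x v).mulVec v) i) + v i * pd i Φ x) := by
        rw [← Finset.sum_add_distrib]
        exact Finset.sum_congr rfl fun i _ => by rw [hsub i]
    _ = ∑ i, -(v i * ((B x v).mulVec v) i) := Finset.sum_congr rfl fun i _ => by ring
    _ = -(v ⬝ᵥ (B x v).mulVec v) := by
        rw [Finset.sum_neg_distrib]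
        rfl
end

section
/- Under the hypotheses of the previous energy identity, if additionally B(q,q̇) is positive definite for all (q,q̇), G(q,q̇) is positive definite, Φ is lower-bounded, and G + Ξ_G is invertible everywhere, then V(q,q̇) = (1/2)q̇ᵀG(q,q̇)q̇ + Φ(q) is nonincreasing along solutions, and dV/dt = 0 implies q̇ = 0. -/
open Matrix

section aux
lemma clm_apply_eq_sum {d : ℕ} (L : (Fin d → ℝ) →L[ℝ] ℝ) (u : Fin d → ℝ) :
    L u = ∑ k, u k * L (Pi.single k 1) := by
  conv_lhs => rw [← Finset.univ_sum_single u, map_sum]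
  refine Finset.sum_congr rfl fun k _ => ?_
  have h : Pi.single k (u k) = u k • (Pi.single k 1 : Fin d → ℝ) := by
    rw [← Pi.single_smul, smul_eq_mul, mul_one]
  rw [h, _root_.map_smul, smul_eq_mul]

lemma fderiv_apply_eq_sum_pd {d : ℕ} {f : (Fin d → ℝ) → ℝ} {x : Fin d → ℝ} (u : Fin d → ℝ) :
    fderiv ℝ f x u = ∑ k, u k * pd k f x :=
  clm_apply_eq_sum _ u

lemma pd_sum {d : ℕ} {ι : Type*} (k : Fin d) {s : Finset ι} {f : ι → (Fin d → ℝ) → ℝ}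
    {x : Fin d → ℝ} (hf : ∀ i ∈ s, DifferentiableAt ℝ (f i) x) :
    pd k (fun y => ∑ i ∈ s, f i y) x = ∑ i ∈ s, pd k (f i) x := by
  simp [pd, fderiv_fun_sum hf]

lemma pd_const_mul {d : ℕ} (k : Fin d) {f : (Fin d → ℝ) → ℝ} {x : Fin d → ℝ}
    (hf : DifferentiableAt ℝ f x) (c : ℝ) :
    pd k (fun y => c * f y) x = c * pd k f x := by
  simp [pd, fderiv_const_mul hf c]

lemma pd_mul_const {d : ℕ} (k : Fin d) {f : (Fin d → ℝ) → ℝ} {x : Fin d → ℝ}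
    (hf : DifferentiableAt ℝ f x) (c : ℝ) :
    pd k (fun y => f y * c) x = pd k f x * c := by
  simp [pd, fderiv_mul_const hf c]; ring

lemma gd_expand {d : ℕ} (G : (Fin d → ℝ) → (Fin d → ℝ) → Matrix (Fin d) (Fin d) ℝ)
    (hG : ∀ i j, Differentiable ℝ fun p : (Fin d → ℝ) × (Fin d → ℝ) => G p.1 p.2 i j)
    (x y u w : Fin d → ℝ) (i j : Fin d) :
    fderiv ℝ (fun p : (Fin d → ℝ) × (Fin d → ℝ) => G p.1 p.2 i j) (x, y) (u, w)
      = (∑ k, u k * pd k (fun x' => G x' y i j) x)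
        + ∑ k, w k * pd k (fun y' => G x y' i j) y := by
  have hf := (hG i j (x, y)).hasFDerivAt
  have hx : HasFDerivAt (fun x' => G x' y i j)
      ((fderiv ℝ (fun p : (Fin d → ℝ) × (Fin d → ℝ) => G p.1 p.2 i j) (x, y)).comp
        (ContinuousLinearMap.inl ℝ _ _)) x :=
    hf.comp x (f := fun e => (e, y)) (hasFDerivAt_prodMk_left x y)
  have hy : HasFDerivAt (fun y' => G x y' i j)
      ((fderiv ℝ (fun p : (Fin d → ℝ) × (Fin d → ℝ) => G p.1 p.2 i j) (x, y)).comp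
        (ContinuousLinearMap.inr ℝ _ _)) y :=
    hf.comp y (f := fun e => (x, e)) (hasFDerivAt_prodMk_right x y)
  have h1 : ((u, w) : (Fin d → ℝ) × (Fin d → ℝ)) = (u, 0) + (0, w) := by simp
  rw [h1, map_add]
  congr 1
  · have := fderiv_apply_eq_sum_pd (f := fun x' => G x' y i j) (x := x) u
    rw [hx.fderiv] at this
    simpa [pd, hx.fderiv] using this
  · have := fderiv_apply_eq_sum_pd (f := fun y' => G x y' i j) (x := y) w
    simpa [pd, hy.fderiv] using this

lemma sum_cyc' {d : ℕ} (f : Fin d → Fin d → Fin d → ℝ) :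
    ∑ i, ∑ j, ∑ k, f i j k = ∑ k, ∑ i, ∑ j, f i j k := by
  calc ∑ i, ∑ j, ∑ k, f i j k = ∑ i, ∑ k, ∑ j, f i j k :=
        Finset.sum_congr rfl fun i _ => Finset.sum_comm
    _ = ∑ k, ∑ i, ∑ j, f i j k := Finset.sum_comm

lemma pull2 {d : ℕ} (c : ℝ) (f : Fin d → Fin d → ℝ) :
    (∑ x, ∑ y, c * f x y) = c * ∑ x, ∑ y, f x y := by
  simp [Finset.mul_sum]

lemma pull3 {d : ℕ} (c : ℝ) (f : Fin d → Fin d → Fin d → ℝ) :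
    (∑ x, ∑ y, ∑ z, c * f x y z) = c * ∑ x, ∑ y, ∑ z, f x y z := by
  simp [Finset.mul_sum]

lemma alg {d : ℕ} (v a : Fin d → ℝ) (Gm : Matrix (Fin d) (Fin d) ℝ)
    (Pq Pv : Fin d → Fin d → Fin d → ℝ) (hs : ∀ i j, Gm i j = Gm j i) :
    (1/2) * (∑ i, ∑ j, ((a i * Gm i j + v i *
        ((∑ k, v k * Pq k i j) + (∑ k, a k * Pv k i j))) * v j + (v i * Gm i j) * a j))
    = ∑ i, v i * ((∑ j, (Gm i j + (1/2) * ∑ l, v l * Pv j i l) * a j)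
        + ((∑ j, (∑ k, v k * Pq k i j) * v j)
            - (1/2) * (∑ j, v j * (∑ l, Pq i j l * v l)))) := by
  have hT1 : (∑ x : Fin d, ∑ y : Fin d, a x * Gm x y * v y * (1 / 2))
      = (1/2) * ∑ i, ∑ j, v i * Gm i j * a j := by
    rw [← pull2 (1/2 : ℝ) (fun i j => v i * Gm i j * a j), Finset.sum_comm]
    exact Finset.sum_congr rfl fun p _ => Finset.sum_congr rfl fun r _ => by
      rw [hs r p]; ring
  have hT2 : (∑ x : Fin d, ∑ y : Fin d, ∑ z : Fin d, v x * v z * Pq z x y * v y * (1 / 2))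
      = (1/2) * ∑ i, ∑ j, ∑ k, v i * v k * Pq k i j * v j := by
    rw [← pull3 (1/2 : ℝ) (fun i j k => v i * v k * Pq k i j * v j)]
    exact Finset.sum_congr rfl fun x _ => Finset.sum_congr rfl fun y _ =>
      Finset.sum_congr rfl fun z _ => by ring
  have hT3 : (∑ x : Fin d, ∑ y : Fin d, ∑ z : Fin d, v x * a z * Pv z x y * v y * (1 / 2))
      = (1/2) * ∑ i, ∑ j, ∑ k, v i * a k * Pv k i j * v j := by
    rw [← pull3 (1/2 : ℝ) (fun i j k => v i * a k * Pv k i j * v j)]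
    exact Finset.sum_congr rfl fun x _ => Finset.sum_congr rfl fun y _ =>
      Finset.sum_congr rfl fun z _ => by ring
  have hT4 : (∑ x : Fin d, ∑ y : Fin d, v x * Gm x y * a y * (1 / 2))
      = (1/2) * ∑ i, ∑ j, v i * Gm i j * a j := by
    rw [← pull2 (1/2 : ℝ) (fun i j => v i * Gm i j * a j)]
    exact Finset.sum_congr rfl fun x _ => Finset.sum_congr rfl fun y _ => by ring
  have hU2 : (∑ x : Fin d, ∑ y : Fin d, ∑ z : Fin d, v x * v z * Pv y x z * a y * (1 / 2))
      = (1/2) * ∑ i, ∑ j, ∑ k, v i * a k * Pv k i j * v j := by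
    rw [← pull3 (1/2 : ℝ) (fun i j k => v i * a k * Pv k i j * v j)]
    refine Finset.sum_congr rfl fun x _ => ?_
    rw [Finset.sum_comm]
    exact Finset.sum_congr rfl fun y _ => Finset.sum_congr rfl fun z _ => by ring
  have hU4 : (∑ x : Fin d, ∑ y : Fin d, ∑ z : Fin d, v x * v y * Pq x y z * v z * (1 / 2))
      = (1/2) * ∑ i, ∑ j, ∑ k, v i * v k * Pq k i j * v j := by
    rw [← pull3 (1/2 : ℝ) (fun i j k => v i * v k * Pq k i j * v j),
      sum_cyc' (fun i j k => (1/2 : ℝ) * (v i * v k * Pq k i j * v j))]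
    exact Finset.sum_congr rfl fun x _ => Finset.sum_congr rfl fun y _ =>
      Finset.sum_congr rfl fun z _ => by ring
  simp only [Finset.mul_sum, Finset.sum_mul, add_mul, mul_add, mul_sub, sub_mul,
    Finset.sum_add_distrib, Finset.sum_sub_distrib]
  ring_nf
  rw [hT1, hT2, hT3, hT4, hU2, hU4]
  ring
end aux

/-- Lyapunov property of GDSs: with `B ≻ 0`, `G ≻ 0`, `Φ` lower bounded and `G + Ξ_G`
invertible, the total energy `V = (1/2)q̇ᵀGq̇ + Φ` is nonincreasing along solutions, and
`dV/dt = 0` implies `q̇ = 0`. -/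
theorem gds_lyapunov {d : ℕ}
    (G : (Fin d → ℝ) → (Fin d → ℝ) → Matrix (Fin d) (Fin d) ℝ)
    (B : (Fin d → ℝ) → (Fin d → ℝ) → Matrix (Fin d) (Fin d) ℝ)
    (Φ : (Fin d → ℝ) → ℝ)
    (q : ℝ → (Fin d → ℝ))
    (hG : ∀ i j, Differentiable ℝ fun p : (Fin d → ℝ) × (Fin d → ℝ) => G p.1 p.2 i j)
    (hsym : ∀ x v i j, G x v i j = G x v j i)
    (hΦ : Differentiable ℝ Φ)
    (hq : ContDiff ℝ 2 q)
    (hode : ∀ t : ℝ,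
      (G (q t) (deriv q t) + XiMat G (q t) (deriv q t)).mulVec (deriv (deriv q) t)
          + xiVec G (q t) (deriv q t)
        = (fun i => - pd i Φ (q t)) - (B (q t) (deriv q t)).mulVec (deriv q t))
    (hB : ∀ x v, (B x v).PosDef)
    (hGpos : ∀ x v, (G x v).PosDef)
    (hΦbdd : BddBelow (Set.range Φ))
    (hinv : ∀ x v, IsUnit (G x v + XiMat G x v).det) :
    Antitone (fun t : ℝ =>
        (1 / 2) * (deriv q t ⬝ᵥ (G (q t) (deriv q t)).mulVec (deriv q t)) + Φ (q t)) ∧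
    ∀ t : ℝ,
      deriv (fun t' =>
          (1 / 2) * (deriv q t' ⬝ᵥ (G (q t') (deriv q t')).mulVec (deriv q t')) + Φ (q t')) t
        = 0 → deriv q t = 0 := by
  -- differentiability of q and deriv q
  have hqd : Differentiable ℝ q := hq.differentiable (by norm_num)
  have hq2 : ContDiff ℝ ((1 : ℕ) + 1) q := by norm_num at hq ⊢; exact hq
  have hvd : Differentiable ℝ (deriv q) :=
    ((contDiff_succ_iff_deriv.mp hq2).2.2).differentiable (by norm_num)
  -- the main derivative computation
  have hVd : ∀ t : ℝ, HasDerivAt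
      (fun t' => (1 / 2) * (deriv q t' ⬝ᵥ (G (q t') (deriv q t')).mulVec (deriv q t')) + Φ (q t'))
      (-(deriv q t ⬝ᵥ (B (q t) (deriv q t)).mulVec (deriv q t))) t := by
    intro t
    set v : Fin d → ℝ := deriv q t with hv
    set a : Fin d → ℝ := deriv (deriv q) t with ha
    have hqc : HasDerivAt q v t := (hqd t).hasDerivAt
    have hvc : HasDerivAt (deriv q) a t := (hvd t).hasDerivAt
    have hvi : ∀ i, HasDerivAt (fun s => deriv q s i) (a i) t := fun i =>
      hasDerivAt_pi.mp hvc i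
    -- derivative of the matrix entries along the solution
    have hGij : ∀ i j, HasDerivAt (fun s => G (q s) (deriv q s) i j)
        (fderiv ℝ (fun p : (Fin d → ℝ) × (Fin d → ℝ) => G p.1 p.2 i j) (q t, v) (v, a)) t :=
      fun i j => ((hG i j (q t, v)).hasFDerivAt).comp_hasDerivAt (f := fun s => (q s, deriv q s)) t (hqc.prodMk hvc)
    -- derivative of each kinetic term
    have hterm : ∀ i j, HasDerivAt
        (fun s => deriv q s i * G (q s) (deriv q s) i j * deriv q s j)
        ((a i * G (q t) v i j + v i *
            fderiv ℝ (fun p : (Fin d → ℝ) × (Fin d → ℝ) => G p.1 p.2 i j) (q t, v) (v, a)) * v j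
          + (v i * G (q t) v i j) * a j) t := fun i j =>
      (((hvi i).mul (hGij i j)).mul (hvi j))
    have hK : HasDerivAt
        (fun s => (1/2 : ℝ) * ∑ i, ∑ j, deriv q s i * G (q s) (deriv q s) i j * deriv q s j)
        ((1/2) * ∑ i, ∑ j, ((a i * G (q t) v i j + v i *
            fderiv ℝ (fun p : (Fin d → ℝ) × (Fin d → ℝ) => G p.1 p.2 i j) (q t, v) (v, a)) * v j
          + (v i * G (q t) v i j) * a j)) t :=
      (HasDerivAt.fun_sum fun i _ => HasDerivAt.fun_sum fun j _ => hterm i j).const_mul (1/2 : ℝ)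
    have hPhi : HasDerivAt (fun s => Φ (q s)) (fderiv ℝ Φ (q t) v) t :=
      (hΦ (q t)).hasFDerivAt.comp_hasDerivAt t hqc
    have hV0 := hK.add hPhi
    -- identify the function with the energy
    have hfun : (fun t' => (1 / 2) * (deriv q t' ⬝ᵥ (G (q t') (deriv q t')).mulVec (deriv q t'))
          + Φ (q t'))
        = fun s => ((1/2 : ℝ) * ∑ i, ∑ j, deriv q s i * G (q s) (deriv q s) i j * deriv q s j)
          + Φ (q s) := by
      funext s
      simp [dotProduct, mulVec, Finset.mul_sum, mul_assoc]
    rw [hfun]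
    -- identify the derivative value
    refine hV0.congr_deriv (Eq.symm ?_)
    -- abbreviations
    set Pq : Fin d → Fin d → Fin d → ℝ :=
      fun k i j => pd k (fun x => G x v i j) (q t) with hPq
    set Pv : Fin d → Fin d → Fin d → ℝ :=
      fun k i j => pd k (fun y => G (q t) y i j) v with hPvdef
    have hGx : ∀ i j, Differentiable ℝ (fun x => G x v i j) := fun i j =>
      (hG i j).comp (differentiable_id.prodMk (differentiable_const v))
    -- the quadratic-form partial derivative
    have hpdq : ∀ i, pd i (fun x => v ⬝ᵥ (G x v).mulVec v) (q t)
        = ∑ j, v j * (∑ l, Pq i j l * v l) := by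
      intro i
      have hfe : (fun x => v ⬝ᵥ (G x v).mulVec v)
          = fun x => ∑ j, v j * (∑ l, G x v j l * v l) := by
        funext x; simp [dotProduct, mulVec]
      rw [hfe, pd_sum i (fun j _ => by
        exact (((hGx j ·) |> fun h => by
          exact DifferentiableAt.const_mul (DifferentiableAt.fun_sum fun l _ =>
            ((hGx j l) (q t)).mul_const (v l)) (v j))))]
      refine Finset.sum_congr rfl fun j _ => ?_
      rw [pd_const_mul i (DifferentiableAt.fun_sum fun l _ => ((hGx j l) (q t)).mul_const (v l)) (v j),
        pd_sum i (fun l _ => ((hGx j l) (q t)).mul_const (v l))]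
      congr 1
      exact Finset.sum_congr rfl fun l _ => pd_mul_const i ((hGx j l) (q t)) (v l)
    -- expand the fderiv of G entries
    have hgd : ∀ i j, fderiv ℝ (fun p : (Fin d → ℝ) × (Fin d → ℝ) => G p.1 p.2 i j)
        (q t, v) (v, a) = (∑ k, v k * Pq k i j) + ∑ k, a k * Pv k i j := fun i j =>
      gd_expand G hG (q t) v v a i j
    -- the component-sum of the ODE
    have hodesum : ∑ i, v i * (((G (q t) v + XiMat G (q t) v).mulVec a) i + xiVec G (q t) v i)
        = ∑ i, v i * (- pd i Φ (q t) - ((B (q t) v).mulVec v) i) := by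
      refine Finset.sum_congr rfl fun i _ => ?_
      have := congrFun (hode t) i
      rw [← hv, ← ha] at this
      simp only [Pi.add_apply, Pi.sub_apply] at this
      rw [this]
    -- main computation
    calc -(v ⬝ᵥ (B (q t) v).mulVec v)
        = ∑ i, v i * (- pd i Φ (q t) - ((B (q t) v).mulVec v) i) + ∑ k, v k * pd k Φ (q t) := by
          simp only [dotProduct, mul_sub, mul_neg, Finset.sum_sub_distrib, Finset.sum_neg_distrib]
          ring
      _ = ∑ i, v i * (((G (q t) v + XiMat G (q t) v).mulVec a) i + xiVec G (q t) v i)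
            + ∑ k, v k * pd k Φ (q t) := by rw [hodesum]
      _ = ∑ i, v i * ((∑ j, (G (q t) v i j + (1/2) * ∑ l, v l * Pv j i l) * a j)
            + ((∑ j, (∑ k, v k * Pq k i j) * v j)
                - (1/2) * (∑ j, v j * (∑ l, Pq i j l * v l))))
            + ∑ k, v k * pd k Φ (q t) := by
          congr 1
          refine Finset.sum_congr rfl fun i _ => ?_
          congr 2
          simp only [xiVec]
          rw [hpdq i]
      _ = (1/2) * (∑ i, ∑ j, ((a i * G (q t) v i j + v i *
              ((∑ k, v k * Pq k i j) + (∑ k, a k * Pv k i j))) * v j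
            + (v i * G (q t) v i j) * a j)) + ∑ k, v k * pd k Φ (q t) := by
          rw [alg v a (G (q t) v) Pq Pv (fun i j => hsym (q t) v i j)]
      _ = (1/2) * (∑ i, ∑ j, ((a i * G (q t) v i j + v i *
              fderiv ℝ (fun p : (Fin d → ℝ) × (Fin d → ℝ) => G p.1 p.2 i j) (q t, v) (v, a)) * v j
            + (v i * G (q t) v i j) * a j)) + fderiv ℝ Φ (q t) v := by
          rw [fderiv_apply_eq_sum_pd (f := Φ) (x := q t) v]
          congr 2
          exact Finset.sum_congr rfl fun i _ => Finset.sum_congr rfl fun j _ => by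
            rw [hgd i j]
  -- conclusions
  constructor
  · apply antitone_of_deriv_nonpos
    · exact fun t => (hVd t).differentiableAt
    · intro t
      rw [(hVd t).deriv]
      have h0 : 0 ≤ deriv q t ⬝ᵥ (B (q t) (deriv q t)).mulVec (deriv q t) := by
        have := (hB (q t) (deriv q t)).posSemidef.dotProduct_mulVec_nonneg (deriv q t)
        simpa using this
      linarith
  · intro t ht
    rw [(hVd t).deriv] at ht
    by_contra hne
    have hpos : 0 < deriv q t ⬝ᵥ (B (q t) (deriv q t)).mulVec (deriv q t) := by
      have := (hB (q t) (deriv q t)).dotProduct_mulVec_pos hne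
      simpa using this
    rw [neg_eq_zero] at ht
    linarith
end
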